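/- arXiv:1301.0692 — 4 statements merged into one kernel-verified Lean document; each statement's English description precedes it below -/
import Mathlib

section
/- A linear map Λ: M_n(ℂ) → M_n(ℂ) is completely positive if and only if its Choi matrix C_Λ = (id_n ⊗ Λ)[P⁺_n] is positive semidefinite (Choi's theorem). -/
open scoped ComplexOrder

open Matrix

private lemma posSemidef_of_isEmpty {m : Type*} [Fintype m] [IsEmpty m]
    (M : Matrix m m ℂ) : M.PosSemidef := by
  constructor
  · ext i j
    exact isEmptyElim i
  · intro x
    simp [dotProduct, Finsupp.sum, Finset.eq_empty_of_isEmpty x.support]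

private lemma sum4_swap {α β γ : Type*} [Fintype α] [Fintype β] [Fintype γ]
    (f : α → α → β → γ → ℂ) :
    ∑ i, ∑ j, ∑ r, ∑ u, f i j r u = ∑ v : β × γ, ∑ i, ∑ j, f i j v.1 v.2 := by
  rw [Fintype.sum_prod_type]
  calc ∑ i, ∑ j, ∑ r, ∑ u, f i j r u
      = ∑ i, ∑ r, ∑ j, ∑ u, f i j r u :=
        Finset.sum_congr rfl fun i _ => Finset.sum_comm
    _ = ∑ r, ∑ i, ∑ j, ∑ u, f i j r u := Finset.sum_comm
    _ = ∑ r, ∑ i, ∑ u, ∑ j, f i j r u :=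
        Finset.sum_congr rfl fun r _ => Finset.sum_congr rfl fun i _ => Finset.sum_comm
    _ = ∑ r, ∑ u, ∑ i, ∑ j, f i j r u :=
        Finset.sum_congr rfl fun r _ => Finset.sum_comm

theorem choi_theorem (n : ℕ)
    (Λ : Matrix (Fin n) (Fin n) ℂ →ₗ[ℂ] Matrix (Fin n) (Fin n) ℂ) :
    (∀ (k : ℕ) (M : Matrix (Fin k × Fin n) (Fin k × Fin n) ℂ), M.PosSemidef →
        (Matrix.of fun p q : Fin k × Fin n =>
          (Λ (Matrix.of fun i j => M (p.1, i) (q.1, j))) p.2 q.2).PosSemidef) ↔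
      (Matrix.of fun p q : Fin n × Fin n =>
        (n : ℂ)⁻¹ * (Λ (Matrix.single p.1 q.1 1)) p.2 q.2).PosSemidef := by
  rcases Nat.eq_zero_or_pos n with rfl | hn
  · constructor
    · intro _
      exact posSemidef_of_isEmpty _
    · intro _ k M _
      exact posSemidef_of_isEmpty _
  have hn0 : (n : ℂ) ≠ 0 := Nat.cast_ne_zero.mpr hn.ne'
  have hsq : ((Real.sqrt n : ℝ) : ℂ) * ((Real.sqrt n : ℝ) : ℂ) = (n : ℂ) := by
    rw [← Complex.ofReal_mul, Real.mul_self_sqrt (by positivity)]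
    norm_num
  constructor
  · -- CP → Choi PSD
    intro h
    set M₀ : Matrix (Fin n × Fin n) (Fin n × Fin n) ℂ :=
      Matrix.of fun p q =>
        (n : ℂ)⁻¹ * (if p.1 = p.2 then 1 else 0) * (if q.1 = q.2 then 1 else 0) with hM₀
    set A : Matrix (Fin 1) (Fin n × Fin n) ℂ :=
      Matrix.of fun _ p => (((Real.sqrt n)⁻¹ : ℝ) : ℂ) * (if p.1 = p.2 then 1 else 0) with hA
    have hM0psd : M₀.PosSemidef := by
      have : M₀ = Aᴴ * A := by
        ext p q
        simp only [hM₀, hA, Matrix.mul_apply, Matrix.conjTranspose_apply, Matrix.of_apply,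
          Fin.sum_univ_one, star_mul', Complex.conj_ofReal]
        by_cases h1 : p.1 = p.2 <;> by_cases h2 : q.1 = q.2 <;>
          simp [h1, h2, ← Complex.ofReal_mul, ← Real.sqrt_inv,
            Real.mul_self_sqrt (by positivity : (0:ℝ) ≤ (n:ℝ)⁻¹)]
      rw [this]
      exact Matrix.posSemidef_conjTranspose_mul_self A
    have key : (Matrix.of fun p q : Fin n × Fin n =>
        (n : ℂ)⁻¹ * (Λ (Matrix.single p.1 q.1 1)) p.2 q.2) =
        Matrix.of fun p q : Fin n × Fin n =>
          (Λ (Matrix.of fun i j => M₀ (p.1, i) (q.1, j))) p.2 q.2 := by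
      ext p q
      simp only [Matrix.of_apply]
      have hinner : (Matrix.of fun i j => M₀ (p.1, i) (q.1, j)) =
          (n : ℂ)⁻¹ • Matrix.single p.1 q.1 1 := by
        ext i j
        by_cases h1 : p.1 = i <;> by_cases h2 : q.1 = j <;>
          simp [hM₀, Matrix.single, h1, h2]
      rw [hinner, LinearMap.map_smul]
      simp
    rw [key]
    exact h n M₀ hM0psd
  · -- Choi PSD → CP
    intro hC k M hM
    open scoped MatrixOrder in
    obtain ⟨B, hB⟩ : ∃ B, M = Bᴴ * B :=
      CStarAlgebra.nonneg_iff_eq_star_mul_self.mp hM.nonneg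
    open scoped MatrixOrder in
    obtain ⟨D, hD⟩ : ∃ D, _ = Dᴴ * D :=
      CStarAlgebra.nonneg_iff_eq_star_mul_self.mp hC.nonneg
    set E : Matrix ((Fin k × Fin n) × (Fin n × Fin n)) (Fin k × Fin n) ℂ :=
      Matrix.of fun v bt =>
        ((Real.sqrt n : ℝ) : ℂ) * ∑ j, B v.1 (bt.1, j) * D v.2 (j, bt.2) with hE
    have hM' : ∀ a b i j, M (a, i) (b, j) = ∑ r, star (B r (a, i)) * B r (b, j) := by
      intro a b i j
      rw [hB]
      simp [Matrix.mul_apply]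
    have hΛ' : ∀ (i : Fin n) s (j : Fin n) t, (Λ (Matrix.single i j 1)) s t =
        (n : ℂ) * ∑ u, star (D u (i, s)) * D u (j, t) := by
      intro i s j t
      have h1 := congrFun (congrFun hD (i, s)) (j, t)
      simp only [Matrix.mul_apply, Matrix.conjTranspose_apply, Matrix.of_apply] at h1
      rw [← h1]
      field_simp
    have key : (Matrix.of fun p q : Fin k × Fin n =>
        (Λ (Matrix.of fun i j => M (p.1, i) (q.1, j))) p.2 q.2) = Eᴴ * E := by
      ext ⟨a, s⟩ ⟨b, t⟩
      have hexp : (Matrix.of fun i j => M ((a, s).1, i) ((b, t).1, j)) =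
          ∑ i, ∑ j, M (a, i) (b, j) • Matrix.single i j (1 : ℂ) := by
        conv_lhs => rw [Matrix.matrix_eq_sum_single
          (Matrix.of fun i j => M ((a, s).1, i) ((b, t).1, j))]
        simp [Matrix.smul_single]
      rw [Matrix.of_apply, hexp]
      simp only [map_sum, LinearMap.map_smul, Matrix.sum_apply, Matrix.smul_apply, smul_eq_mul]
      -- LHS now: ∑ i, ∑ j, M (a,i) (b,j) * Λ (stdBasisMatrix i j 1) s t
      have lhs_eq : ∑ i, ∑ j, M (a, i) (b, j) * (Λ (Matrix.single i j 1)) s t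
          = ∑ v : (Fin k × Fin n) × (Fin n × Fin n), ∑ i, ∑ j,
              (star (B v.1 (a, i)) * B v.1 (b, j)) *
                ((n : ℂ) * (star (D v.2 (i, s)) * D v.2 (j, t))) := by
        calc ∑ i, ∑ j, M (a, i) (b, j) * (Λ (Matrix.single i j 1)) s t
            = ∑ i, ∑ j, ∑ r : Fin k × Fin n, ∑ u : Fin n × Fin n,
                (star (B r (a, i)) * B r (b, j)) *
                  ((n : ℂ) * (star (D u (i, s)) * D u (j, t))) := by
              refine Finset.sum_congr rfl fun i _ => Finset.sum_congr rfl fun j _ => ?_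
              rw [hM' a b i j, hΛ' i s j t, Finset.sum_mul]
              refine Finset.sum_congr rfl fun r _ => ?_
              simp only [Finset.mul_sum]
          _ = _ := sum4_swap _
      rw [lhs_eq, Matrix.mul_apply]
      refine Finset.sum_congr rfl fun v _ => ?_
      have hst : star ((Real.sqrt n : ℝ) : ℂ) = ((Real.sqrt n : ℝ) : ℂ) := by
        rw [Complex.star_def, Complex.conj_ofReal]
      rw [Matrix.conjTranspose_apply, hE]
      simp only [Matrix.of_apply]
      rw [star_mul', hst, mul_mul_mul_comm, hsq, star_sum, Finset.sum_mul_sum, Finset.mul_sum]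
      refine Finset.sum_congr rfl fun i _ => ?_
      rw [Finset.mul_sum]
      refine Finset.sum_congr rfl fun j _ => ?_
      simp only [star_mul']
      ring
    rw [key]
    exact Matrix.posSemidef_conjTranspose_mul_self E
end

section
/- If a bipartite density matrix ρ₁₂ on ℂ^{d₁}⊗ℂ^{d₂} is separable, i.e. ρ₁₂ = Σ_i p_i ρ_i¹⊗ρ_i² with p_i ≥ 0, Σp_i = 1 and ρ_i¹, ρ_i² density matrices, then the realigned matrix ρ₁₂^R has trace norm at most 1. -/
open scoped ComplexOrder

open Matrix Kronecker

noncomputable def traceNorm {m n : Type*} [Fintype m] [Fintype n] [DecidableEq n]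
    (A : Matrix m n ℂ) : ℝ :=
  ∑ i, Real.sqrt ((Matrix.isHermitian_conjTranspose_mul_self A).eigenvalues i)

noncomputable def realign {d : ℕ} (X : Matrix (Fin d × Fin d) (Fin d × Fin d) ℂ) :
    Matrix (Fin d × Fin d) (Fin d × Fin d) ℂ :=
  Matrix.of fun p q => X (q.2, p.2) (q.1, p.1)

local notation "⟪" x ", " y "⟫" => @inner ℂ _ _ x y

private lemma frob_le_one {d : ℕ} (M : Matrix (Fin d) (Fin d) ℂ) (hM : M.PosSemidef)
    (ht : M.trace = 1) : ∑ a, ∑ b, ‖M a b‖ ^ 2 ≤ 1 := by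
  have hH := hM.1
  set U : Matrix (Fin d) (Fin d) ℂ := ↑hH.eigenvectorUnitary with hU
  set lam := hH.eigenvalues with hlam
  have hUU : star U * U = 1 := Unitary.coe_star_mul_self hH.eigenvectorUnitary
  have spec : M = U * diagonal (RCLike.ofReal ∘ lam) * star U := by
    have := hH.spectral_theorem; rwa [Unitary.conjStarAlgAut_apply] at this
  -- trace M = ∑ lam
  have htr : M.trace = ∑ j, (lam j : ℂ) := by
    calc M.trace = (U * (diagonal (RCLike.ofReal ∘ lam) * star U)).trace := by
          rw [← mul_assoc, ← spec]
      _ = ((diagonal (RCLike.ofReal ∘ lam) * star U) * U).trace := trace_mul_comm _ _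
      _ = (diagonal (RCLike.ofReal ∘ lam) * (star U * U)).trace := by rw [mul_assoc]
      _ = ∑ j, (lam j : ℂ) := by rw [hUU, mul_one, trace_diagonal]; rfl
  have hsum : ∑ j, lam j = 1 := by
    have : ((∑ j, lam j : ℝ) : ℂ) = 1 := by rw [Complex.ofReal_sum]; rw [← htr] at *; exact ht ▸ rfl
    exact_mod_cast this
  -- trace (M*M) = ∑ lam^2
  have htr2 : (M * M).trace = ∑ j, ((lam j : ℂ)) ^ 2 := by
    have : M * M = U * (diagonal (RCLike.ofReal ∘ lam) * diagonal (RCLike.ofReal ∘ lam)) * star U := by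
      calc M * M = (U * diagonal (RCLike.ofReal ∘ lam) * star U) *
            (U * diagonal (RCLike.ofReal ∘ lam) * star U) := by rw [← spec]
        _ = U * diagonal (RCLike.ofReal ∘ lam) * (star U * U) * diagonal (RCLike.ofReal ∘ lam) * star U := by
            simp only [mul_assoc]
        _ = _ := by rw [hUU, mul_one]; simp only [mul_assoc]
    rw [this]
    calc (U * (diagonal (RCLike.ofReal ∘ lam) * diagonal (RCLike.ofReal ∘ lam)) * star U).trace
        = ((diagonal (RCLike.ofReal ∘ lam) * diagonal (RCLike.ofReal ∘ lam)) * (star U * U)).trace := by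
          rw [mul_assoc, trace_mul_comm, mul_assoc]
      _ = ∑ j, ((lam j : ℂ)) ^ 2 := by
          rw [hUU, mul_one, diagonal_mul_diagonal, trace_diagonal]
          simp [sq]
  -- trace (M*M) = ∑ ‖M a b‖^2
  have hfro : (M * M).trace = ((∑ a, ∑ b, ‖M a b‖ ^ 2 : ℝ) : ℂ) := by
    rw [Matrix.trace, Complex.ofReal_sum]
    refine Finset.sum_congr rfl fun a _ => ?_
    rw [Matrix.diag, Matrix.mul_apply, Complex.ofReal_sum]
    refine Finset.sum_congr rfl fun b _ => ?_
    have : M b a = starRingEnd ℂ (M a b) := by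
      have := hH.symm ▸ congrFun (congrFun hH a) b
      -- hH : Mᴴ = M
      have h2 : Mᴴ a b = M a b := by rw [hH]
      simpa [conjTranspose_apply] using (congrArg (starRingEnd ℂ) h2.symm).symm
    rw [this, Complex.mul_conj']; push_cast; ring
  -- combine
  have key : ((∑ a, ∑ b, ‖M a b‖ ^ 2 : ℝ) : ℂ) = ((∑ j, lam j ^ 2 : ℝ) : ℂ) := by
    rw [← hfro, htr2, Complex.ofReal_sum]
    exact Finset.sum_congr rfl fun j _ => by push_cast; ring
  have key' : ∑ a, ∑ b, ‖M a b‖ ^ 2 = ∑ j, lam j ^ 2 := by exact_mod_cast key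
  rw [key']
  calc ∑ j, lam j ^ 2 ≤ (∑ j, lam j) ^ 2 :=
        Finset.sum_sq_le_sq_sum_of_nonneg fun j _ => hM.eigenvalues_nonneg j
    _ = 1 := by rw [hsum]; norm_num

private lemma traceNorm_le_of_decomp {m n : Type*} [Fintype m] [Fintype n] [DecidableEq n] {k : ℕ}
    (A : Matrix m n ℂ) (u : Fin k → EuclideanSpace ℂ m) (v : Fin k → EuclideanSpace ℂ n)
    (hA : ∀ p q, A p q = ∑ i, u i p * v i q) :
    traceNorm A ≤ ∑ i, ‖u i‖ * ‖v i‖ := by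
  classical
  have hB : (Aᴴ * A).IsHermitian := Matrix.isHermitian_conjTranspose_mul_self A
  set μ : n → ℝ := hB.eigenvalues with hμdef
  have hμ0 : ∀ j, 0 ≤ μ j := fun j =>
    (Matrix.posSemidef_conjTranspose_mul_self A).eigenvalues_nonneg j
  set e : n → EuclideanSpace ℂ n := fun j => hB.eigenvectorBasis j with hedef
  have he : Orthonormal ℂ e := hB.eigenvectorBasis.orthonormal
  have heig : ∀ j, (Aᴴ * A) *ᵥ (e j : n → ℂ) = μ j • (e j : n → ℂ) := fun j =>
    hB.mulVec_eigenvectorBasis j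
  set g : n → EuclideanSpace ℂ m := fun j => WithLp.toLp 2 (A *ᵥ (e j : n → ℂ) : m → ℂ) with hgdef
  have hinm : ∀ (x y : EuclideanSpace ℂ m), ⟪x, y⟫ = star (x : m → ℂ) ⬝ᵥ (y : m → ℂ) := by
    intro x y
    simp [PiLp.inner_apply, dotProduct, RCLike.inner_apply]
    exact Finset.sum_congr rfl fun _ _ => mul_comm _ _
  have hinn : ∀ (x y : EuclideanSpace ℂ n), ⟪x, y⟫ = star (x : n → ℂ) ⬝ᵥ (y : n → ℂ) := by
    intro x y
    simp [PiLp.inner_apply, dotProduct, RCLike.inner_apply]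
    exact Finset.sum_congr rfl fun _ _ => mul_comm _ _
  have hee : ∀ j l, ⟪e j, e l⟫ = if j = l then 1 else 0 := orthonormal_iff_ite.mp he
  have hgg : ∀ j l, ⟪g j, g l⟫ = if j = l then (μ l : ℂ) else 0 := by
    intro j l
    have : ⟪g j, g l⟫ = star (e j : n → ℂ) ⬝ᵥ ((Aᴴ * A) *ᵥ (e l : n → ℂ)) := by
      rw [hinm]
      show star (A *ᵥ (e j : n → ℂ)) ⬝ᵥ (A *ᵥ (e l : n → ℂ)) = _
      rw [star_mulVec, dotProduct_mulVec, dotProduct_mulVec, vecMul_vecMul]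
    rw [this, heig l]
    have : star (e j : n → ℂ) ⬝ᵥ (μ l • (e l : n → ℂ)) = (μ l : ℂ) * ⟪e j, e l⟫ := by
      rw [hinn]
      rw [show (μ l • (e l : n → ℂ)) = (μ l : ℂ) • (e l : n → ℂ) by
        funext q; simp [Complex.real_smul]]
      rw [dotProduct_smul]
      rfl
    rw [this, hee j l]
    split <;> simp
  have hgzero : ∀ j, μ j = 0 → g j = 0 := by
    intro j h
    have h1 : ⟪g j, g j⟫ = 0 := by rw [hgg j j, if_pos rfl, h]; simp
    exact inner_self_eq_zero.mp h1
  set σ : n → ℝ := fun j => Real.sqrt (μ j) with hσdef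
  set f : n → EuclideanSpace ℂ m := fun j => ((σ j : ℂ))⁻¹ • g j with hfdef
  have hfg : ∀ j l, ⟪f j, g l⟫ = ((σ j : ℂ))⁻¹ * ⟪g j, g l⟫ := by
    intro j l
    rw [hfdef]
    simp only [inner_smul_left, map_inv₀, Complex.conj_ofReal]
  have hfgj : ∀ j, ⟪f j, g j⟫ = (σ j : ℂ) := by
    intro j
    rw [hfg, hgg, if_pos rfl]
    rcases eq_or_ne (μ j) 0 with h | h
    · simp [h, hσdef]
    · have hσ : σ j ≠ 0 := by
        simp only [hσdef]
        exact Real.sqrt_ne_zero'.mpr (lt_of_le_of_ne (hμ0 j) (Ne.symm h))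
      have hμσ : μ j = σ j * σ j := (Real.mul_self_sqrt (hμ0 j)).symm
      rw [hμσ]
      push_cast
      field_simp
  have hf_on : Orthonormal ℂ (fun j : {j : n // μ j ≠ 0} => f j) := by
    rw [orthonormal_iff_ite]
    intro j l
    have : ⟪f j.1, f l.1⟫ = ((σ j.1 : ℂ))⁻¹ * (((σ l.1 : ℂ))⁻¹ * ⟪g j.1, g l.1⟫) := by
      rw [hfdef]
      simp only [inner_smul_left, inner_smul_right, map_inv₀, Complex.conj_ofReal]
      ring
    rw [this, hgg]
    rcases eq_or_ne j l with h | h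
    · subst h
      rw [if_pos rfl, if_pos rfl]
      have hσ : σ j.1 ≠ 0 := by
        simp only [hσdef]
        exact Real.sqrt_ne_zero'.mpr (lt_of_le_of_ne (hμ0 j.1) (Ne.symm j.2))
      have hμσ : μ j.1 = σ j.1 * σ j.1 := (Real.mul_self_sqrt (hμ0 j.1)).symm
      rw [hμσ]
      push_cast
      field_simp
    · have hne : j.1 ≠ l.1 := fun hh => h (Subtype.ext hh)
      rw [if_neg hne, if_neg h]
      simp
  have hbesself : ∀ x : EuclideanSpace ℂ m, ∑ j, ‖⟪f j, x⟫‖ ^ 2 ≤ ‖x‖ ^ 2 := by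
    intro x
    have h0 : ∀ j ∈ Finset.univ, (fun j => ‖⟪f j, x⟫‖ ^ 2) j ≠ 0 → μ j ≠ 0 := by
      intro j _ hj hc
      apply hj
      have : f j = 0 := by rw [hfdef]; simp [hgzero j hc]
      simp [this]
    calc ∑ j, ‖⟪f j, x⟫‖ ^ 2
        = ∑ j ∈ Finset.univ.filter (fun j => μ j ≠ 0), ‖⟪f j, x⟫‖ ^ 2 :=
          (Finset.sum_filter_of_ne h0).symm
      _ = ∑ j : {j : n // μ j ≠ 0}, ‖⟪f j.1, x⟫‖ ^ 2 := by
          rw [Finset.sum_subtype]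
          intro j; simp
      _ ≤ ‖x‖ ^ 2 := hf_on.sum_inner_products_le x
  -- expansion
  have hexpand : ∀ j, ⟪f j, g j⟫ =
      ∑ i, (∑ q, v i q * (e j : n → ℂ) q) * ⟪f j, u i⟫ := by
    intro j
    have hAe : ∀ p, (A *ᵥ (e j : n → ℂ)) p = ∑ i, (∑ q, v i q * (e j : n → ℂ) q) * u i p := by
      intro p
      simp only [mulVec, dotProduct, hA, Finset.sum_mul]
      rw [Finset.sum_comm]
      exact Finset.sum_congr rfl fun i _ => Finset.sum_congr rfl fun q _ => by ring
    rw [hinm]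
    show star (f j : m → ℂ) ⬝ᵥ (A *ᵥ (e j : n → ℂ)) = _
    simp only [dotProduct, hAe, Finset.mul_sum]
    rw [Finset.sum_comm]
    refine Finset.sum_congr rfl fun i _ => ?_
    rw [hinm]
    simp only [dotProduct, Finset.mul_sum, Finset.sum_mul]
    refine Finset.sum_congr rfl fun p _ => ?_
    simp only [Pi.star_apply]
    exact Finset.sum_congr rfl fun q _ => by ring
  have hc_le : ∀ i, ∑ j, ‖(∑ q, v i q * (e j : n → ℂ) q)‖ ^ 2 ≤ ‖v i‖ ^ 2 := by
    intro i
    set x : EuclideanSpace ℂ n := WithLp.toLp 2 (fun q => (starRingEnd ℂ) (v i q) : n → ℂ) with hxdef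
    have h1 : ∀ j, (∑ q, v i q * (e j : n → ℂ) q) = ⟪x, e j⟫ := by
      intro j
      rw [hinn]
      simp [dotProduct, hxdef]
    have h2 : ∑ j, ‖⟪x, e j⟫‖ ^ 2 ≤ ‖x‖ ^ 2 := by
      calc ∑ j, ‖⟪x, e j⟫‖ ^ 2 = ∑ j, ‖⟪e j, x⟫‖ ^ 2 := by
            refine Finset.sum_congr rfl fun j _ => ?_
            rw [← norm_inner_symm]
        _ ≤ ‖x‖ ^ 2 := he.sum_inner_products_le x
    have h3 : ‖x‖ = ‖v i‖ := by
      rw [EuclideanSpace.norm_eq, EuclideanSpace.norm_eq]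
      congr 1
      exact Finset.sum_congr rfl fun q _ => by simp [hxdef]
    calc ∑ j, ‖(∑ q, v i q * (e j : n → ℂ) q)‖ ^ 2 = ∑ j, ‖⟪x, e j⟫‖ ^ 2 := by
          exact Finset.sum_congr rfl fun j _ => by rw [h1]
      _ ≤ ‖x‖ ^ 2 := h2
      _ = ‖v i‖ ^ 2 := by rw [h3]
  -- main chain
  have hTN : traceNorm A = ∑ j, σ j := rfl
  rw [hTN]
  have hre : ∑ j, σ j = (∑ j, ⟪f j, g j⟫).re := by
    rw [Complex.re_sum]
    exact Finset.sum_congr rfl fun j _ => by rw [hfgj]; simp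
  rw [hre]
  have hswap : (∑ j, ⟪f j, g j⟫) = ∑ i, ∑ j, (∑ q, v i q * (e j : n → ℂ) q) * ⟪f j, u i⟫ := by
    rw [Finset.sum_comm]
    exact Finset.sum_congr rfl fun j _ => hexpand j
  rw [hswap, Complex.re_sum]
  calc ∑ i, (∑ j, (∑ q, v i q * (e j : n → ℂ) q) * ⟪f j, u i⟫).re
      ≤ ∑ i, ‖v i‖ * ‖u i‖ := by
        refine Finset.sum_le_sum fun i _ => ?_
        set c : n → ℂ := fun j => ∑ q, v i q * (e j : n → ℂ) q with hcdef
        set b : n → ℂ := fun j => ⟪f j, u i⟫ with hbdef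
        calc (∑ j, c j * b j).re ≤ ‖∑ j, c j * b j‖ := Complex.re_le_norm _
          _ ≤ ∑ j, ‖c j * b j‖ := norm_sum_le _ _
          _ = ∑ j, ‖c j‖ * ‖b j‖ := Finset.sum_congr rfl fun j _ => norm_mul _ _
          _ ≤ Real.sqrt (∑ j, ‖c j‖ ^ 2) * Real.sqrt (∑ j, ‖b j‖ ^ 2) := by
              have hnn : (0:ℝ) ≤ ∑ j, ‖c j‖ * ‖b j‖ :=
                Finset.sum_nonneg fun j _ => mul_nonneg (norm_nonneg _) (norm_nonneg _)
              have hcs := Finset.sum_mul_sq_le_sq_mul_sq Finset.univ (fun j => ‖c j‖) (fun j => ‖b j‖)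
              calc ∑ j, ‖c j‖ * ‖b j‖ = Real.sqrt ((∑ j, ‖c j‖ * ‖b j‖) ^ 2) :=
                    (Real.sqrt_sq hnn).symm
                _ ≤ Real.sqrt ((∑ j, ‖c j‖ ^ 2) * ∑ j, ‖b j‖ ^ 2) := Real.sqrt_le_sqrt hcs
                _ = _ := Real.sqrt_mul (Finset.sum_nonneg fun j _ => sq_nonneg _) _
          _ ≤ ‖v i‖ * ‖u i‖ := by
              have h1 : Real.sqrt (∑ j, ‖c j‖ ^ 2) ≤ ‖v i‖ := by
                calc Real.sqrt (∑ j, ‖c j‖ ^ 2) ≤ Real.sqrt (‖v i‖ ^ 2) :=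
                      Real.sqrt_le_sqrt (hc_le i)
                  _ = ‖v i‖ := Real.sqrt_sq (norm_nonneg _)
              have h2 : Real.sqrt (∑ j, ‖b j‖ ^ 2) ≤ ‖u i‖ := by
                calc Real.sqrt (∑ j, ‖b j‖ ^ 2) ≤ Real.sqrt (‖u i‖ ^ 2) :=
                      Real.sqrt_le_sqrt (hbesself (u i))
                  _ = ‖u i‖ := Real.sqrt_sq (norm_nonneg _)
              exact mul_le_mul h1 h2 (Real.sqrt_nonneg _) (norm_nonneg _)
    _ = ∑ i, ‖u i‖ * ‖v i‖ := Finset.sum_congr rfl fun i _ => mul_comm _ _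


theorem realignment_criterion (d k : ℕ)
    (p : Fin k → ℝ) (hp : ∀ i, 0 ≤ p i) (hpsum : ∑ i, p i = 1)
    (ρ₁ ρ₂ : Fin k → Matrix (Fin d) (Fin d) ℂ)
    (h₁ : ∀ i, (ρ₁ i).PosSemidef ∧ (ρ₁ i).trace = 1)
    (h₂ : ∀ i, (ρ₂ i).PosSemidef ∧ (ρ₂ i).trace = 1)
    (ρ : Matrix (Fin d × Fin d) (Fin d × Fin d) ℂ)
    (hρ : ρ = ∑ i, (p i : ℂ) • (ρ₁ i ⊗ₖ ρ₂ i)) :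
    traceNorm (realign ρ) ≤ 1 := by
  classical
  set u : Fin k → EuclideanSpace ℂ (Fin d × Fin d) :=
    fun i => WithLp.toLp 2 (fun pr => (Real.sqrt (p i) : ℂ) * (ρ₂ i) pr.2 pr.1) with hu
  set v : Fin k → EuclideanSpace ℂ (Fin d × Fin d) :=
    fun i => WithLp.toLp 2 (fun qr => (Real.sqrt (p i) : ℂ) * (ρ₁ i) qr.2 qr.1) with hv
  have hsq : ∀ i, ((Real.sqrt (p i) : ℂ)) * (Real.sqrt (p i) : ℂ) = (p i : ℂ) := by
    intro i
    rw [← Complex.ofReal_mul, Real.mul_self_sqrt (hp i)]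
  have hAe : ∀ pr qr, realign ρ pr qr = ∑ i, u i pr * v i qr := by
    intro pr qr
    simp only [realign, Matrix.of_apply, hρ, Matrix.sum_apply, Matrix.smul_apply,
      Matrix.kroneckerMap_apply, smul_eq_mul]
    refine Finset.sum_congr rfl fun i _ => ?_
    simp only [hu, hv, PiLp.toLp_apply]
    rw [← hsq i]
    ring
  have hnormsq : ∀ (M : Matrix (Fin d) (Fin d) ℂ), M.PosSemidef → M.trace = 1 → ∀ c : ℝ, 0 ≤ c →
      ∀ x : EuclideanSpace ℂ (Fin d × Fin d),
      (∀ pr, x pr = (Real.sqrt c : ℂ) * M pr.2 pr.1) → ‖x‖ ≤ Real.sqrt c := by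
    intro M hM ht c hc x hx
    rw [EuclideanSpace.norm_eq]
    apply Real.sqrt_le_sqrt
    have hfr := frob_le_one M hM ht
    calc ∑ pr : Fin d × Fin d, ‖x pr‖ ^ 2
        = ∑ pr : Fin d × Fin d, c * ‖M pr.2 pr.1‖ ^ 2 := by
          refine Finset.sum_congr rfl fun pr _ => ?_
          rw [hx pr, norm_mul, mul_pow]
          congr 1
          rw [Complex.norm_real, Real.norm_eq_abs, sq_abs, Real.sq_sqrt hc]
      _ = c * ∑ pr : Fin d × Fin d, ‖M pr.2 pr.1‖ ^ 2 := (Finset.mul_sum _ _ _).symm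
      _ ≤ c * 1 := by
          apply mul_le_mul_of_nonneg_left _ hc
          calc ∑ pr : Fin d × Fin d, ‖M pr.2 pr.1‖ ^ 2
              = ∑ a, ∑ b, ‖M b a‖ ^ 2 := Fintype.sum_prod_type _
            _ = ∑ b, ∑ a, ‖M b a‖ ^ 2 := Finset.sum_comm
            _ ≤ 1 := hfr
      _ = c := mul_one c
  have hnu : ∀ i, ‖u i‖ ≤ Real.sqrt (p i) := fun i =>
    hnormsq (ρ₂ i) (h₂ i).1 (h₂ i).2 (p i) (hp i) (u i) (fun pr => rfl)
  have hnv : ∀ i, ‖v i‖ ≤ Real.sqrt (p i) := fun i =>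
    hnormsq (ρ₁ i) (h₁ i).1 (h₁ i).2 (p i) (hp i) (v i) (fun pr => rfl)
  calc traceNorm (realign ρ) ≤ ∑ i, ‖u i‖ * ‖v i‖ := traceNorm_le_of_decomp _ u v hAe
    _ ≤ ∑ i, Real.sqrt (p i) * Real.sqrt (p i) :=
        Finset.sum_le_sum fun i _ =>
          mul_le_mul (hnu i) (hnv i) (norm_nonneg _) (Real.sqrt_nonneg _)
    _ = ∑ i, p i := Finset.sum_congr rfl fun i _ => Real.mul_self_sqrt (hp i)
    _ = 1 := hpsum
end

section
/- Any set of 5 mutually anticommuting Pauli tensor products σ_{αβ} = σ_α⊗σ_β on ℂ⁴ must be of the form {σ_{0i}, σ_{0j}, σ_{1k}, σ_{2k}, σ_{3k}} or {σ_{i0}, σ_{j0}, σ_{k1}, σ_{k2}, σ_{k3}} with i, j, k a permutation-compatible triple, i.e. the antisymmetric tensor ε_{ijk} ≠ 0. -/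
open Matrix Kronecker

noncomputable def pauli : Fin 4 → Matrix (Fin 2) (Fin 2) ℂ :=
  ![1, !![0, 1; 1, 0], !![0, -Complex.I; Complex.I, 0], !![1, 0; 0, -1]]

noncomputable def sigma2 (a b : Fin 4) : Matrix (Fin 2 × Fin 2) (Fin 2 × Fin 2) ℂ :=
  pauli a ⊗ₖ pauli b

def scAnti (a c : Fin 4) : Prop := a ≠ c ∧ a ≠ 0 ∧ c ≠ 0

instance (a c : Fin 4) : Decidable (scAnti a c) := by unfold scAnti; infer_instance

lemma scAnti_symm {a c : Fin 4} (h : scAnti a c) : scAnti c a := ⟨h.1.symm, h.2.2, h.2.1⟩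

lemma pauli_comm (a c : Fin 4) (h : ¬ scAnti a c) : pauli a * pauli c = pauli c * pauli a := by
  fin_cases a <;> fin_cases c <;> simp_all [scAnti, pauli]

lemma pauli_anticomm (a c : Fin 4) (h : scAnti a c) : pauli a * pauli c = -(pauli c * pauli a) := by
  fin_cases a <;> fin_cases c <;> simp_all [scAnti, pauli]

lemma pauli_det (a : Fin 4) : (pauli a).det ≠ 0 := by
  fin_cases a <;> norm_num [pauli, Matrix.det_fin_two_of, Matrix.one_fin_two, Complex.ext_iff]

lemma sigma2_ne_neg (a b c d : Fin 4) :
    (pauli a * pauli c) ⊗ₖ (pauli b * pauli d) ≠ -((pauli a * pauli c) ⊗ₖ (pauli b * pauli d)) := by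
  intro h
  have h0 : (pauli a * pauli c) ⊗ₖ (pauli b * pauli d) = 0 := by
    have := congrArg (· + (pauli a * pauli c) ⊗ₖ (pauli b * pauli d)) h
    simp at this
    have h2 : (2 : ℂ) • ((pauli a * pauli c) ⊗ₖ (pauli b * pauli d)) = 0 := by
      rw [two_smul]; exact this
    simpa using h2
  have := congrArg Matrix.det h0
  rw [Matrix.det_kronecker] at this
  simp [Matrix.det_mul] at this
  rcases this with ((h | h) | (h | h)) <;> exact pauli_det _ h

lemma neg_kron {α n m p q : Type*} [Ring α] (A : Matrix n m α) (B : Matrix p q α) :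
    (-A) ⊗ₖ (-B) = A ⊗ₖ B := by
  ext ⟨i, j⟩ ⟨k, l⟩
  simp [Matrix.kroneckerMap_apply]

abbrev P := Fin 4 × Fin 4

def compat (p q : P) : Prop := Xor' (scAnti p.1 q.1) (scAnti p.2 q.2)

instance (p q : P) : Decidable (compat p q) := by unfold compat Xor'; infer_instance

lemma key (a b c d : Fin 4)
    (h : sigma2 a b * sigma2 c d = -(sigma2 c d * sigma2 a b)) :
    compat (a, b) (c, d) := by
  rw [sigma2, sigma2, ← Matrix.mul_kronecker_mul, ← Matrix.mul_kronecker_mul] at h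
  by_cases h1 : scAnti a c <;> by_cases h2 : scAnti b d
  · rw [pauli_anticomm c a (scAnti_symm h1), pauli_anticomm d b (scAnti_symm h2),
      neg_kron] at h
    exact absurd h (sigma2_ne_neg a b c d)
  · exact Or.inl ⟨h1, h2⟩
  · exact Or.inr ⟨h2, h1⟩
  · rw [pauli_comm c a (fun hh => h1 (scAnti_symm hh)),
      pauli_comm d b (fun hh => h2 (scAnti_symm hh))] at h
    exact absurd h (sigma2_ne_neg a b c d)

set_option maxHeartbeats 10000000 in
set_option maxRecDepth 10000 in
set_option synthInstance.maxHeartbeats 2000000 in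
set_option synthInstance.maxSize 2000 in
lemma comb : ∀ v0 v1 : P, compat v0 v1 → ∀ v2 : P, compat v0 v2 → compat v1 v2 →
    ∀ v3 : P, compat v0 v3 → compat v1 v3 → compat v2 v3 →
    ∀ v4 : P, compat v0 v4 → compat v1 v4 → compat v2 v4 → compat v3 v4 →
    ∃ i j k : Fin 4, i ≠ 0 ∧ j ≠ 0 ∧ k ≠ 0 ∧ i ≠ j ∧ j ≠ k ∧ i ≠ k ∧
      (({v0, v1, v2, v3, v4} : Finset P) =
          {((0 : Fin 4), i), ((0 : Fin 4), j), (1, k), (2, k), (3, k)} ∨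
       ({v0, v1, v2, v3, v4} : Finset P) =
          {(i, (0 : Fin 4)), (j, (0 : Fin 4)), (k, 1), (k, 2), (k, 3)}) := by
  decide

theorem five_anticommuting_pauli_classification (f : Fin 5 → Fin 4 × Fin 4)
    (hinj : Function.Injective f)
    (hanti : ∀ i j : Fin 5, i ≠ j →
      sigma2 (f i).1 (f i).2 * sigma2 (f j).1 (f j).2 =
        -(sigma2 (f j).1 (f j).2 * sigma2 (f i).1 (f i).2)) :
    ∃ i j k : Fin 4, i ≠ 0 ∧ j ≠ 0 ∧ k ≠ 0 ∧ i ≠ j ∧ j ≠ k ∧ i ≠ k ∧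
      (Set.range f =
          ({((0 : Fin 4), i), ((0 : Fin 4), j), (1, k), (2, k), (3, k)} :
            Set (Fin 4 × Fin 4)) ∨
        Set.range f =
          ({(i, (0 : Fin 4)), (j, (0 : Fin 4)), (k, 1), (k, 2), (k, 3)} :
            Set (Fin 4 × Fin 4))) := by
  have hc : ∀ i j : Fin 5, i ≠ j → compat (f i) (f j) := fun i j hij => key _ _ _ _ (hanti i j hij)
  obtain ⟨i, j, k, hi, hj, hk, hij, hjk, hik, hs⟩ :=
    comb (f 0) (f 1) (hc 0 1 (by decide)) (f 2) (hc 0 2 (by decide)) (hc 1 2 (by decide))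
      (f 3) (hc 0 3 (by decide)) (hc 1 3 (by decide)) (hc 2 3 (by decide))
      (f 4) (hc 0 4 (by decide)) (hc 1 4 (by decide)) (hc 2 4 (by decide)) (hc 3 4 (by decide))
  have hr : Set.range f = (({f 0, f 1, f 2, f 3, f 4} : Finset P) : Set P) := by
    ext x
    constructor
    · rintro ⟨t, rfl⟩; fin_cases t <;> simp
    · intro hx
      simp only [Finset.coe_insert, Finset.coe_singleton, Set.mem_insert_iff,
        Set.mem_singleton_iff] at hx
      rcases hx with rfl | rfl | rfl | rfl | rfl
      exacts [⟨0, rfl⟩, ⟨1, rfl⟩, ⟨2, rfl⟩, ⟨3, rfl⟩, ⟨4, rfl⟩]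
  refine ⟨i, j, k, hi, hj, hk, hij, hjk, hik, ?_⟩
  rcases hs with hs | hs
  · left
    rw [hr, hs]
    simp only [Finset.coe_insert, Finset.coe_singleton]
  · right
    rw [hr, hs]
    simp only [Finset.coe_insert, Finset.coe_singleton]
end

section
/- If a linear map Λ = Σ_{μ,ν} λ_{μν} S_{μν} on M_{2ⁿ}(ℂ) (with S_{μν}(X) = σ_μ X σ_ν over multi-indexed tensor products of Pauli matrices) is positive, then the diagonal map Λ_diag = Σ_μ λ_{μμ} S_{μμ} is also positive. -/
open scoped ComplexOrder

open Matrix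

/-- Tensor product of `n` Pauli matrices, indexed by a multi-index. -/
noncomputable def pauliVec {n : ℕ} (μ : Fin n → Fin 4) :
    Matrix (Fin n → Fin 2) (Fin n → Fin 2) ℂ :=
  Matrix.of fun x y => ∏ i, pauli (μ i) (x i) (y i)

noncomputable def sgn : Fin 4 → Fin 4 → ℂ :=
  fun d m => if d = 0 ∨ m = 0 ∨ d = m then 1 else -1

lemma pauli_conj (d m : Fin 4) :
    pauli d * pauli m * pauli d = sgn d m • pauli m := by
  fin_cases d <;> fin_cases m <;>
    · ext i j
      fin_cases i <;> fin_cases j <;>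
        simp [pauli, sgn, Matrix.mul_apply, Fin.sum_univ_succ, Matrix.one_apply,
          Complex.ext_iff]

lemma pauli_herm (d : Fin 4) : (pauli d)ᴴ = pauli d := by
  fin_cases d <;>
    · ext i j
      fin_cases i <;> fin_cases j <;>
        simp [pauli, Matrix.conjTranspose_apply, Matrix.one_apply, Complex.ext_iff]

lemma sgn_orth (m k : Fin 4) :
    ∑ d : Fin 4, sgn d m * sgn d k = if m = k then 4 else 0 := by
  fin_cases m <;> fin_cases k <;>
    norm_num (config := { decide := true }) [sgn, Fin.sum_univ_four]

lemma entry_prod_mul {n : ℕ} (A B : Fin n → Matrix (Fin 2) (Fin 2) ℂ) :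
    (Matrix.of fun x y : Fin n → Fin 2 => ∏ i, A i (x i) (y i)) *
      (Matrix.of fun x y : Fin n → Fin 2 => ∏ i, B i (x i) (y i)) =
      Matrix.of fun x y : Fin n → Fin 2 => ∏ i, (A i * B i) (x i) (y i) := by
  ext x y
  simp only [Matrix.mul_apply, Matrix.of_apply, ← Finset.prod_mul_distrib]
  exact (Fintype.prod_sum fun i k => A i (x i) k * B i k (y i)).symm

lemma pauliVec_conj {n : ℕ} (δ μ : Fin n → Fin 4) :
    pauliVec δ * pauliVec μ * pauliVec δ = (∏ i, sgn (δ i) (μ i)) • pauliVec μ := by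
  unfold pauliVec
  rw [entry_prod_mul, entry_prod_mul]
  ext x y
  simp only [Matrix.of_apply, Matrix.smul_apply, pauli_conj, smul_eq_mul]
  simp only [Matrix.smul_apply, smul_eq_mul, Finset.prod_mul_distrib]

lemma pauliVec_herm {n : ℕ} (δ : Fin n → Fin 4) : (pauliVec δ)ᴴ = pauliVec δ := by
  ext x y
  simp only [Matrix.conjTranspose_apply, pauliVec, Matrix.of_apply, star_prod]
  refine Finset.prod_congr rfl fun i _ => ?_
  have := congrFun (congrFun (pauli_herm (δ i)) (x i)) (y i)
  simpa [Matrix.conjTranspose_apply] using this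

lemma sgnVec_orth {n : ℕ} (μ ν : Fin n → Fin 4) :
    ∑ δ : Fin n → Fin 4, (∏ i, sgn (δ i) (μ i)) * ∏ i, sgn (δ i) (ν i) =
      if μ = ν then (4 : ℂ) ^ n else 0 := by
  have : ∑ δ : Fin n → Fin 4, (∏ i, sgn (δ i) (μ i)) * ∏ i, sgn (δ i) (ν i) =
      ∏ i, ∑ d : Fin 4, sgn d (μ i) * sgn d (ν i) := by
    rw [Fintype.prod_sum fun i d => sgn d (μ i) * sgn d (ν i)]
    simp [Finset.prod_mul_distrib]
  rw [this]
  simp only [sgn_orth]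
  by_cases h : μ = ν
  · subst h; simp
  · simp only [h, if_false]
    obtain ⟨i, hi⟩ := Function.ne_iff.mp h
    exact Finset.prod_eq_zero (Finset.mem_univ i) (by simp [hi])

lemma psd_smul {m : Type*} [Fintype m] {M : Matrix m m ℂ} (hM : M.PosSemidef)
    {c : ℂ} (hc : 0 ≤ c) : (c • M).PosSemidef := by
  constructor
  · have hcs : star c = c := by
      rw [Complex.star_def, Complex.conj_eq_iff_im]
      exact ((Complex.nonneg_iff).mp hc).2.symm
    unfold Matrix.IsHermitian
    rw [Matrix.conjTranspose_smul, hM.1.eq, hcs]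
  · exact (hM.smul hc).2

lemma psd_sum {m : Type*} [Fintype m] {ι : Type*} (s : Finset ι)
    (f : ι → Matrix m m ℂ) (h : ∀ i ∈ s, (f i).PosSemidef) :
    (∑ i ∈ s, f i).PosSemidef := by
  classical
  induction s using Finset.induction_on with
  | empty => simpa using Matrix.PosSemidef.zero
  | insert _ _ hi ih =>
    rw [Finset.sum_insert hi]
    exact ((h _ (Finset.mem_insert_self _ _)).add
      (ih fun i his => h i (Finset.mem_insert_of_mem his)))

theorem diagonal_of_positive_is_positive (n : ℕ)
    (l : (Fin n → Fin 4) → (Fin n → Fin 4) → ℂ)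
    (hpos : ∀ X : Matrix (Fin n → Fin 2) (Fin n → Fin 2) ℂ, X.PosSemidef →
      (∑ μ : Fin n → Fin 4, ∑ ν : Fin n → Fin 4,
          l μ ν • (pauliVec μ * X * pauliVec ν)).PosSemidef) :
    ∀ X : Matrix (Fin n → Fin 2) (Fin n → Fin 2) ℂ, X.PosSemidef →
      (∑ μ : Fin n → Fin 4, l μ μ • (pauliVec μ * X * pauliVec μ)).PosSemidef := by
  intro X hX
  set S : Matrix (Fin n → Fin 2) (Fin n → Fin 2) ℂ :=
    ∑ δ : Fin n → Fin 4, pauliVec δ *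
      (∑ μ : Fin n → Fin 4, ∑ ν : Fin n → Fin 4,
        l μ ν • (pauliVec μ * (pauliVec δ * X * pauliVec δ) * pauliVec ν)) * pauliVec δ
    with hS
  have hSpsd : S.PosSemidef := by
    refine psd_sum _ _ fun δ _ => ?_
    have hXc : (pauliVec δ * X * pauliVec δ).PosSemidef := by
      have := hX.mul_mul_conjTranspose_same (pauliVec δ)
      rwa [pauliVec_herm] at this
    have hin := hpos _ hXc
    have := hin.mul_mul_conjTranspose_same (pauliVec δ)
    rwa [pauliVec_herm] at this
  have term : ∀ δ μ ν : Fin n → Fin 4,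
      pauliVec δ * (l μ ν • (pauliVec μ * (pauliVec δ * X * pauliVec δ) * pauliVec ν)) *
        pauliVec δ =
      ((∏ i, sgn (δ i) (μ i)) * (∏ i, sgn (δ i) (ν i)) * l μ ν) •
        (pauliVec μ * X * pauliVec ν) := by
    intro δ μ ν
    have assoc : pauliVec δ * (pauliVec μ * (pauliVec δ * X * pauliVec δ) * pauliVec ν) *
        pauliVec δ =
        (pauliVec δ * pauliVec μ * pauliVec δ) * X *
          (pauliVec δ * pauliVec ν * pauliVec δ) := by
      noncomm_ring
    rw [Matrix.mul_smul, Matrix.smul_mul, assoc, pauliVec_conj, pauliVec_conj]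
    rw [Matrix.smul_mul, Matrix.smul_mul, Matrix.mul_smul, smul_smul, smul_smul]
    ring_nf
  have key : S = (4 : ℂ) ^ n • ∑ μ : Fin n → Fin 4,
      l μ μ • (pauliVec μ * X * pauliVec μ) := by
    rw [hS]
    simp only [Finset.mul_sum, Finset.sum_mul, term]
    rw [Finset.sum_comm]
    refine Eq.trans ?_ (Finset.smul_sum).symm
    refine Finset.sum_congr rfl fun μ _ => ?_
    rw [Finset.sum_comm]
    have : ∀ ν : Fin n → Fin 4,
        ∑ δ : Fin n → Fin 4, ((∏ i, sgn (δ i) (μ i)) * (∏ i, sgn (δ i) (ν i)) * l μ ν) •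
          (pauliVec μ * X * pauliVec ν) =
        ((if μ = ν then (4 : ℂ) ^ n else 0) * l μ ν) • (pauliVec μ * X * pauliVec ν) := by
      intro ν
      rw [← Finset.sum_smul, ← Finset.sum_mul, sgnVec_orth]
    simp only [this, ite_mul, zero_mul, ite_smul, zero_smul,
      Finset.sum_ite_eq, Finset.mem_univ, if_true, smul_smul]
  rw [key] at hSpsd
  have h4 : (0:ℂ) < (4 : ℂ) ^ n := by positivity
  have hinv : ((4:ℂ) ^ n)⁻¹ = ((((4:ℝ) ^ n)⁻¹ : ℝ) : ℂ) := by
    rw [Complex.ofReal_inv, Complex.ofReal_pow]; norm_num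
  have := psd_smul hSpsd (c := ((4:ℂ) ^ n)⁻¹) (by
    rw [hinv]
    exact_mod_cast inv_nonneg.mpr (by positivity : (0:ℝ) ≤ 4 ^ n))
  rw [inv_smul_smul₀ (ne_of_gt h4)] at this
  exact this
end
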